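/- Let K₁ and K₂ be compact convex sets in ℝⁿ (n ≥ 3), each with more than one point, such that for every hyperplane L of ℝⁿ the orthogonal projections π_L(K₁) and π_L(K₂) are homothetic. Suppose [x₀, z₀] is a common exposed diameter of K₁ and K₂ with midpoint at the origin o, and suppose there exist opposite closed halfspaces P₀ and Q₀ whose boundary hyperplanes are orthogonal to the segment [x₀, z₀], with K₁ ∩ P₀ = K₂ ∩ P₀ = {x₀} and K₁ ∩ Q₀ = K₂ ∩ Q₀ = {z₀}. Then K₂ = K₁ or K₂ = −K₁. -/

import Mathlib

open scoped RealInnerProductSpace Pointwise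

/-- Nonempty sets `X₁` and `X₂` in `ℝⁿ` are *homothetic* provided
`X₁ = z + λ • X₂` for some point `z` and some scalar `λ ≠ 0`. -/
def Homothetic {n : ℕ} (X₁ X₂ : Set (EuclideanSpace ℝ (Fin n))) : Prop :=
  ∃ (z : EuclideanSpace ℝ (Fin n)) (l : ℝ), l ≠ 0 ∧ X₁ = (fun x => z + l • x) '' X₂

/-- The orthogonal projection of `ℝⁿ` onto the plane `p + L`. -/
noncomputable def planeProj {n : ℕ} (p : EuclideanSpace ℝ (Fin n))
    (L : Submodule ℝ (EuclideanSpace ℝ (Fin n))) (x : EuclideanSpace ℝ (Fin n)) :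
    EuclideanSpace ℝ (Fin n) :=
  p + (L.orthogonalProjectionOnto (x - p) : EuclideanSpace ℝ (Fin n))

section Aux

variable {F : Type*} [NormedAddCommGroup F] [InnerProductSpace ℝ F]

/-- The support function of a set. -/
noncomputable def spt (K : Set F) (y : F) : ℝ := sSup ((fun x => ⟪y, x⟫) '' K)

lemma spt_le {K : Set F} (hK : IsCompact K) {x : F} (hx : x ∈ K) (y : F) :
    ⟪y, x⟫ ≤ spt K y :=
  le_csSup ((hK.image (continuous_const.inner continuous_id)).bddAbove)
    (Set.mem_image_of_mem _ hx)

lemma spt_exists {K : Set F} (hK : IsCompact K) (hne : K.Nonempty) (y : F) :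
    ∃ x ∈ K, spt K y = ⟪y, x⟫ := by
  have h := (hK.image (continuous_const.inner continuous_id)).sSup_mem
    (hne.image (fun x => ⟪y, x⟫))
  obtain ⟨x, hx, hx'⟩ := h
  exact ⟨x, hx, hx'.symm⟩

lemma spt_ub {K : Set F} (hne : K.Nonempty) {y : F} {u : ℝ}
    (h : ∀ x ∈ K, ⟪y, x⟫ ≤ u) : spt K y ≤ u :=
  csSup_le (hne.image (fun x => ⟪y, x⟫)) (by rintro v ⟨x, hx, rfl⟩; exact h x hx)

lemma spt_neg_set {K : Set F} (y : F) : spt (-K) y = spt K (-y) := by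
  unfold spt
  congr 1
  ext v
  constructor
  · rintro ⟨x, hx, rfl⟩
    exact ⟨-x, hx, by simp [inner_neg_neg]⟩
  · rintro ⟨x, hx, rfl⟩
    exact ⟨-x, by simpa using hx, by simp [inner_neg_left, inner_neg_right]⟩

lemma spt_lipschitz {K : Set F} (hK : IsCompact K) (hne : K.Nonempty) {R : ℝ}
    (hR : ∀ x ∈ K, ‖x‖ ≤ R) (y y' : F) :
    |spt K y - spt K y'| ≤ R * ‖y - y'‖ := by
  have key : ∀ w w' : F, spt K w - spt K w' ≤ R * ‖w - w'‖ := by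
    intro w w'
    obtain ⟨x, hx, hxe⟩ := spt_exists hK hne w
    have h1 : ⟪w, x⟫ - ⟪w', x⟫ ≤ R * ‖w - w'‖ := by
      have : ⟪w - w', x⟫ ≤ ‖w - w'‖ * ‖x‖ := real_inner_le_norm _ _
      have hx' : ‖x‖ ≤ R := hR x hx
      have h0 : (0:ℝ) ≤ ‖w - w'‖ := norm_nonneg _
      nlinarith [inner_sub_left (𝕜 := ℝ) w w' x]
    have h2 : ⟪w', x⟫ ≤ spt K w' := spt_le hK hx w'
    linarith [hxe.le, hxe.ge]
  rw [abs_sub_le_iff]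
  constructor
  · exact key y y'
  · simpa [norm_sub_rev] using key y' y

lemma spt_affine_pos {S : Set F} (hS : IsCompact S) (hne : S.Nonempty)
    (z : F) {l : ℝ} (hl : 0 < l) (y : F) :
    spt ((fun x => z + l • x) '' S) y = ⟪y, z⟫ + l * spt S y := by
  have hc : Continuous (fun x : F => z + l • x) :=
    continuous_const.add (continuous_id.const_smul l)
  have hSc : IsCompact ((fun x => z + l • x) '' S) := hS.image hc
  apply le_antisymm
  · apply spt_ub (hne.image _)
    rintro v ⟨x, hx, rfl⟩
    have := spt_le hS hx y
    simp only [inner_add_right, real_inner_smul_right]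
    nlinarith
  · obtain ⟨x, hx, hxe⟩ := spt_exists hS hne y
    have := spt_le hSc (Set.mem_image_of_mem _ hx) y
    simp only [inner_add_right, real_inner_smul_right] at this
    linarith [hxe ▸ this]

lemma spt_affine_neg {S : Set F} (hS : IsCompact S) (hne : S.Nonempty)
    (z : F) {l : ℝ} (hl : l < 0) (y : F) :
    spt ((fun x => z + l • x) '' S) y = ⟪y, z⟫ + (-l) * spt S (-y) := by
  have hc : Continuous (fun x : F => z + l • x) :=
    continuous_const.add (continuous_id.const_smul l)
  have hSc : IsCompact ((fun x => z + l • x) '' S) := hS.image hc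
  apply le_antisymm
  · apply spt_ub (hne.image _)
    rintro v ⟨x, hx, rfl⟩
    have := spt_le hS hx (-y)
    simp only [inner_add_right, real_inner_smul_right, inner_neg_left] at *
    nlinarith
  · obtain ⟨x, hx, hxe⟩ := spt_exists hS hne (-y)
    have := spt_le hSc (Set.mem_image_of_mem _ hx) y
    simp only [inner_add_right, real_inner_smul_right] at this
    have hyx : ⟪y, x⟫ = -⟪-y, x⟫ := by simp [inner_neg_left]
    rw [hyx] at this
    rw [hxe]
    linarith

/-- If the asymmetry function is `t*C` along a line of directions through `a`, then it
vanishes at `a`. -/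
lemma spt_diff_eq_zero {K : Set F} (hc : IsCompact K) (hne : K.Nonempty)
    (a b : F) (C : ℝ)
    (hkey : ∀ t : ℝ, 0 < t → spt K (-(a + t • b)) - spt K (a + t • b) = t * C) :
    spt K (-a) = spt K a := by
  obtain ⟨R, hR⟩ := hc.isBounded.exists_norm_le
  set R' := max R 0 with hR'def
  have hR' : ∀ x ∈ K, ‖x‖ ≤ R' := fun x hx => (hR x hx).trans (le_max_left _ _)
  have hR0 : (0:ℝ) ≤ R' := le_max_right _ _
  have habs : ∀ ε : ℝ, 0 < ε → |spt K (-a) - spt K a| ≤ 0 + ε := by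
    intro ε hε
    set D := 2*R'*‖b‖ + |C| + 1 with hDdef
    have hD : 0 < D := by positivity
    set t := ε / D with htdef
    have ht : 0 < t := div_pos hε hD
    have h3 := hkey t ht
    have hn1 : ‖(-a) - (-(a + t • b))‖ = t * ‖b‖ := by
      rw [show (-a) - (-(a + t • b)) = t • b by abel]
      rw [norm_smul]; simp [abs_of_pos ht]
    have hn2 : ‖(a + t • b) - a‖ = t * ‖b‖ := by
      rw [show (a + t • b) - a = t • b by abel]
      rw [norm_smul]; simp [abs_of_pos ht]
    have habs1 : |spt K (-a) - spt K (-(a + t • b))| ≤ R' * (t * ‖b‖) := by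
      have := spt_lipschitz hc hne hR' (-a) (-(a + t • b))
      rwa [hn1] at this
    have habs2 : |spt K (a + t • b) - spt K a| ≤ R' * (t * ‖b‖) := by
      have := spt_lipschitz hc hne hR' (a + t • b) a
      rwa [hn2] at this
    have key2 : spt K (-a) - spt K a - t*C
        = (spt K (-a) - spt K (-(a + t • b))) + (spt K (a + t • b) - spt K a) := by
      rw [← h3]; ring
    have h4 : |spt K (-a) - spt K a - t*C| ≤ R' * (t * ‖b‖) + R' * (t * ‖b‖) := by
      rw [key2]
      exact (abs_add_le _ _).trans (add_le_add habs1 habs2)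
    have e0 : spt K (-a) - spt K a = (spt K (-a) - spt K a - t*C) + t*C := by ring
    calc |spt K (-a) - spt K a|
        = |(spt K (-a) - spt K a - t*C) + t*C| := by rw [← e0]
      _ ≤ |spt K (-a) - spt K a - t*C| + |t*C| := abs_add_le _ _
      _ ≤ (R' * (t * ‖b‖) + R' * (t * ‖b‖)) + t * |C| := by
          refine add_le_add h4 ?_
          rw [abs_mul, abs_of_pos ht]
      _ = t * (2*R'*‖b‖ + |C|) := by ring
      _ ≤ t * D := by nlinarith
      _ = ε := by rw [htdef]; field_simp
      _ = 0 + ε := by ring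
  have h0 : |spt K (-a) - spt K a| ≤ 0 := le_of_forall_pos_le_add habs
  have := abs_nonneg (spt K (-a) - spt K a)
  have : spt K (-a) - spt K a = 0 := by
    have := abs_eq_zero.1 (le_antisymm h0 (abs_nonneg _))
    exact this
  linarith

end Aux

section AuxE

variable {n : ℕ}

lemma inner_planeProj (L : Submodule ℝ (EuclideanSpace ℝ (Fin n)))
    {y : EuclideanSpace ℝ (Fin n)} (hy : y ∈ L) (x : EuclideanSpace ℝ (Fin n)) :
    ⟪y, planeProj 0 L x⟫ = ⟪y, x⟫ := by
  have h := Submodule.sub_starProjection_mem_orthogonal (K := L) x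
  have h0 : ⟪y, x - (L.orthogonalProjectionOnto x : EuclideanSpace ℝ (Fin n))⟫ = 0 :=
    (Submodule.mem_orthogonal L _).1 h y hy
  rw [inner_sub_right] at h0
  simp only [planeProj, sub_zero, zero_add]
  linarith

lemma planeProj_self (L : Submodule ℝ (EuclideanSpace ℝ (Fin n)))
    {x : EuclideanSpace ℝ (Fin n)} (hx : x ∈ L) : planeProj 0 L x = x := by
  simp only [planeProj, sub_zero, zero_add]
  exact Submodule.starProjection_eq_self_iff.2 hx

lemma continuous_planeProj (p : EuclideanSpace ℝ (Fin n))
    (L : Submodule ℝ (EuclideanSpace ℝ (Fin n))) : Continuous (planeProj p L) := by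
  unfold planeProj
  exact continuous_const.add
    ((L.subtypeL.comp (L.orthogonalProjectionOnto)).continuous.comp
      (continuous_id.sub continuous_const))

lemma spt_proj (L : Submodule ℝ (EuclideanSpace ℝ (Fin n)))
    {y : EuclideanSpace ℝ (Fin n)} (hy : y ∈ L) (K : Set (EuclideanSpace ℝ (Fin n))) :
    spt (planeProj 0 L '' K) y = spt K y := by
  unfold spt
  rw [Set.image_image]
  congr 1
  exact Set.image_congr (fun x _ => inner_planeProj L hy x)

lemma exists_orth_vec (hn : 3 ≤ n) (v w : EuclideanSpace ℝ (Fin n)) :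
    ∃ u : EuclideanSpace ℝ (Fin n), u ≠ 0 ∧ ⟪u, v⟫ = 0 ∧ ⟪u, w⟫ = 0 := by
  set W : Submodule ℝ (EuclideanSpace ℝ (Fin n)) := Submodule.span ℝ {v, w}
  have hle : Module.finrank ℝ W ≤ 2 := by
    classical
    have h1 : W = Submodule.span ℝ ((({v, w} : Finset (EuclideanSpace ℝ (Fin n))) : Set (EuclideanSpace ℝ (Fin n)))) := by
      simp [W]
    rw [h1]
    have h2 := finrank_span_finset_le_card (R := ℝ) ({v, w} : Finset (EuclideanSpace ℝ (Fin n)))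
    have h3 : ({v, w} : Finset (EuclideanSpace ℝ (Fin n))).card ≤ 2 :=
      (Finset.card_insert_le _ _).trans (by simp)
    simpa [Set.finrank] using h2.trans h3
  have hrk := Submodule.finrank_add_finrank_orthogonal (𝕜 := ℝ) W
  rw [finrank_euclideanSpace_fin] at hrk
  have hne : Wᗮ ≠ ⊥ := by
    intro hbot
    rw [hbot] at hrk
    simp at hrk
    omega
  obtain ⟨u, hu, hu0⟩ := (Submodule.ne_bot_iff _).1 hne
  refine ⟨u, hu0, ?_, ?_⟩
  · exact (Submodule.mem_orthogonal' _ _).1 hu v (Submodule.subset_span (by simp))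
  · exact (Submodule.mem_orthogonal' _ _).1 hu w (Submodule.subset_span (by simp))

lemma finrank_orth_singleton {u : EuclideanSpace ℝ (Fin n)} (hu : u ≠ 0) :
    Module.finrank ℝ ((Submodule.span ℝ {u})ᗮ : Submodule ℝ (EuclideanSpace ℝ (Fin n))) = n - 1 := by
  have h1 : Module.finrank ℝ (Submodule.span ℝ {u}) = 1 := finrank_span_singleton hu
  have hrk := Submodule.finrank_add_finrank_orthogonal (𝕜 := ℝ) (Submodule.span ℝ {u})
  rw [finrank_euclideanSpace_fin, h1] at hrk
  omega

lemma mem_orth_singleton {u y : EuclideanSpace ℝ (Fin n)} (h : ⟪u, y⟫ = 0) :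
    y ∈ (Submodule.span ℝ {u})ᗮ := by
  rw [Submodule.mem_orthogonal]
  intro v hv
  obtain ⟨a, rfl⟩ := Submodule.mem_span_singleton.1 hv
  rw [real_inner_smul_left, h, mul_zero]

lemma subset_of_spt_le {K₁ K₂ : Set (EuclideanSpace ℝ (Fin n))}
    (hc₁ : IsCompact K₁) (hcv₂ : Convex ℝ K₂) (hcl₂ : IsClosed K₂)
    (hne₂ : K₂.Nonempty) (h : ∀ y, spt K₁ y ≤ spt K₂ y) : K₁ ⊆ K₂ := by
  intro x hx
  by_contra hxK
  obtain ⟨f, u, hfb, hfx⟩ := geometric_hahn_banach_closed_point hcv₂ hcl₂ hxK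
  set y := (InnerProductSpace.toDual ℝ (EuclideanSpace ℝ (Fin n))).symm f with hy
  have hyv : ∀ v, ⟪y, v⟫ = f v := fun v => InnerProductSpace.toDual_symm_apply
  have h1 : spt K₂ y ≤ u := spt_ub hne₂ (fun b hb => (hyv b).le.trans (hfb b hb).le)
  have h2 : ⟪y, x⟫ ≤ spt K₁ y := spt_le hc₁ hx y
  rw [hyv x] at h2
  linarith [h y]

lemma eq_of_spt {K₁ K₂ : Set (EuclideanSpace ℝ (Fin n))}
    (hc₁ : IsCompact K₁) (hc₂ : IsCompact K₂)
    (hcv₁ : Convex ℝ K₁) (hcv₂ : Convex ℝ K₂)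
    (hne₁ : K₁.Nonempty) (hne₂ : K₂.Nonempty)
    (h : ∀ y, spt K₁ y = spt K₂ y) : K₁ = K₂ :=
  Set.Subset.antisymm
    (subset_of_spt_le hc₁ hcv₂ hc₂.isClosed hne₂ (fun y => (h y).le))
    (subset_of_spt_le hc₂ hcv₁ hc₁.isClosed hne₁ (fun y => (h y).ge))

end AuxE

set_option maxHeartbeats 2000000 in
/-- Suppose the compact convex sets `K₁, K₂ ⊆ ℝⁿ` (`n ≥ 3`), each with more than one
point, have homothetic projections on every hyperplane, and suppose `[x₀, z₀]` is a
common exposed diameter of `K₁` and `K₂` with midpoint at the origin, exposed for both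
sets by the disjoint opposite closed halfspaces `P₀ = {y : α ≤ ⟪g, y⟫}` and
`Q₀ = {y : ⟪g, y⟫ ≤ β}` whose boundary hyperplanes are orthogonal to `[x₀, z₀]`
(i.e. `x₀ - z₀` is a nonzero multiple of `g`).  Then `K₂ = K₁` or `K₂ = -K₁`. -/
theorem eq_or_eq_neg_of_common_exposed_diameter
    (n : ℕ) (hn : 3 ≤ n)
    (K₁ K₂ : Set (EuclideanSpace ℝ (Fin n)))
    (hc₁ : IsCompact K₁) (hc₂ : IsCompact K₂)
    (hcv₁ : Convex ℝ K₁) (hcv₂ : Convex ℝ K₂)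
    (hpts₁ : ∃ a ∈ K₁, ∃ b ∈ K₁, a ≠ b) (hpts₂ : ∃ a ∈ K₂, ∃ b ∈ K₂, a ≠ b)
    (hproj : ∀ (p : EuclideanSpace ℝ (Fin n)) (L : Submodule ℝ (EuclideanSpace ℝ (Fin n))),
      Module.finrank ℝ L = n - 1 →
      Homothetic (planeProj p L '' K₁) (planeProj p L '' K₂))
    (x₀ z₀ : EuclideanSpace ℝ (Fin n)) (g : EuclideanSpace ℝ (Fin n)) (α β : ℝ)
    (hg : ‖g‖ = 1) (hβα : β < α)
    (hmid : x₀ + z₀ = 0)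
    (horth : ∃ c : ℝ, c ≠ 0 ∧ x₀ - z₀ = c • g)
    (hP₁ : K₁ ∩ {y | α ≤ ⟪g, y⟫} = {x₀}) (hP₂ : K₂ ∩ {y | α ≤ ⟪g, y⟫} = {x₀})
    (hQ₁ : K₁ ∩ {y | ⟪g, y⟫ ≤ β} = {z₀}) (hQ₂ : K₂ ∩ {y | ⟪g, y⟫ ≤ β} = {z₀}) :
    K₂ = K₁ ∨ K₂ = -K₁ := by
  classical
  obtain ⟨c, hc, hcg⟩ := horth
  have hz₀eq : z₀ = -x₀ := eq_neg_of_add_eq_zero_right hmid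
  subst hz₀eq
  have hne₁ : K₁.Nonempty := by obtain ⟨a, ha, -⟩ := hpts₁; exact ⟨a, ha⟩
  have hne₂ : K₂.Nonempty := by obtain ⟨a, ha, -⟩ := hpts₂; exact ⟨a, ha⟩
  have hgne : g ≠ 0 := by intro h; rw [h] at hg; simp at hg
  have hgg : ⟪g, g⟫ = 1 := by
    rw [real_inner_self_eq_norm_sq, hg]; norm_num
  obtain ⟨α₁, hα₁⟩ : ∃ a : ℝ, a = ⟪g, x₀⟫ := ⟨_, rfl⟩
  have hx₀half : x₀ = (c/2) • g := by
    have h2 : x₀ - -x₀ = c • g := hcg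
    rw [sub_neg_eq_add, ← two_smul ℝ] at h2
    calc x₀ = (2:ℝ)⁻¹ • ((2:ℝ) • x₀) := by rw [smul_smul]; norm_num
    _ = (2:ℝ)⁻¹ • (c • g) := by rw [h2]
    _ = (c/2) • g := by rw [smul_smul]; ring_nf
  have hα₁c : α₁ = c/2 := by
    rw [hα₁, hx₀half, real_inner_smul_right, hgg, mul_one]
  have hx₀g : x₀ = α₁ • g := by rw [hα₁c]; exact hx₀half
  have hgz₀ : ⟪g, -x₀⟫ = -α₁ := by rw [inner_neg_right, ← hα₁]
  -- basic exposure facts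
  have hx₀P : x₀ ∈ K₁ ∩ {y | α ≤ ⟪g, y⟫} := by rw [hP₁]; rfl
  have hαα₁ : α ≤ α₁ := by rw [hα₁]; exact hx₀P.2
  have hz₀Q : -x₀ ∈ K₁ ∩ {y | ⟪g, y⟫ ≤ β} := by rw [hQ₁]; rfl
  have hβα₁ : -α₁ ≤ β := by rw [← hgz₀]; exact hz₀Q.2
  have hα₁pos : 0 < α₁ := by linarith
  have hfacts : ∀ K : Set (EuclideanSpace ℝ (Fin n)),
      K ∩ {y | α ≤ ⟪g, y⟫} = {x₀} → K ∩ {y | ⟪g, y⟫ ≤ β} = {-x₀} →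
      x₀ ∈ K ∧ (-x₀) ∈ K ∧ (∀ x ∈ K, -α₁ ≤ ⟪g, x⟫ ∧ ⟪g, x⟫ ≤ α₁) ∧
        (∀ x ∈ K, ⟪g, x⟫ = α₁ → x = x₀) ∧ (∀ x ∈ K, ⟪g, x⟫ = -α₁ → x = -x₀) := by
    intro K hP hQ
    have hx₀K : x₀ ∈ K := by
      have : x₀ ∈ K ∩ {y | α ≤ ⟪g, y⟫} := by rw [hP]; rfl
      exact this.1
    have hz₀K : -x₀ ∈ K := by
      have : -x₀ ∈ K ∩ {y | ⟪g, y⟫ ≤ β} := by rw [hQ]; rfl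
      exact this.1
    refine ⟨hx₀K, hz₀K, ?_, ?_, ?_⟩
    · intro x hx
      constructor
      · by_cases h : ⟪g, x⟫ ≤ β
        · have : x ∈ K ∩ {y | ⟪g, y⟫ ≤ β} := ⟨hx, h⟩
          rw [hQ] at this
          rw [Set.mem_singleton_iff] at this
          rw [this, hgz₀]
        · push_neg at h; linarith
      · by_cases h : α ≤ ⟪g, x⟫
        · have : x ∈ K ∩ {y | α ≤ ⟪g, y⟫} := ⟨hx, h⟩
          rw [hP] at this
          rw [Set.mem_singleton_iff] at this
          rw [this, ← hα₁]
        · push_neg at h; linarith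
    · intro x hx he
      have : x ∈ K ∩ {y | α ≤ ⟪g, y⟫} := ⟨hx, by rw [Set.mem_setOf_eq, he]; linarith⟩
      rw [hP] at this
      exact this
    · intro x hx he
      have : x ∈ K ∩ {y | ⟪g, y⟫ ≤ β} := ⟨hx, by rw [Set.mem_setOf_eq, he]; linarith⟩
      rw [hQ] at this
      exact this
  obtain ⟨hx₀K₁, hz₀K₁, hbound₁, hmax₁, hmin₁⟩ := hfacts K₁ hP₁ hQ₁
  obtain ⟨hx₀K₂, hz₀K₂, hbound₂, hmax₂, hmin₂⟩ := hfacts K₂ hP₂ hQ₂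
  -- The key dichotomy: projections along hyperplanes containing g coincide up to sign
  have hD : ∀ y : EuclideanSpace ℝ (Fin n),
      (spt K₁ y = spt K₂ y ∧ spt K₁ (-y) = spt K₂ (-y)) ∨
      (spt K₁ y = spt K₂ (-y) ∧ spt K₁ (-y) = spt K₂ y) := by
    intro y
    obtain ⟨u, hu0, hug, huy⟩ := exists_orth_vec hn g y
    set L := (Submodule.span ℝ {u})ᗮ with hLdef
    have hgL : g ∈ L := mem_orth_singleton hug
    have hyL : y ∈ L := mem_orth_singleton huy
    obtain ⟨z, l, hl, hImg⟩ := hproj 0 L (finrank_orth_singleton hu0)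
    have hx₀L : x₀ ∈ L := hx₀g ▸ L.smul_mem α₁ hgL
    have hz₀L : -x₀ ∈ L := L.neg_mem hx₀L
    have hcS₂ : IsCompact (planeProj 0 L '' K₂) := hc₂.image (continuous_planeProj 0 L)
    have hneS₂ : (planeProj 0 L '' K₂).Nonempty := hne₂.image _
    have hx₀S₁ : x₀ ∈ planeProj 0 L '' K₁ := ⟨x₀, hx₀K₁, planeProj_self L hx₀L⟩
    have hx₀S₂ : x₀ ∈ planeProj 0 L '' K₂ := ⟨x₀, hx₀K₂, planeProj_self L hx₀L⟩
    have hz₀S₁ : -x₀ ∈ planeProj 0 L '' K₁ := ⟨-x₀, hz₀K₁, planeProj_self L hz₀L⟩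
    have hz₀S₂ : -x₀ ∈ planeProj 0 L '' K₂ := ⟨-x₀, hz₀K₂, planeProj_self L hz₀L⟩
    have hSb₁ : ∀ s ∈ planeProj 0 L '' K₁, -α₁ ≤ ⟪g, s⟫ ∧ ⟪g, s⟫ ≤ α₁ := by
      rintro s ⟨x, hx, rfl⟩
      rw [inner_planeProj L hgL]
      exact hbound₁ x hx
    have hSb₂ : ∀ s ∈ planeProj 0 L '' K₂, -α₁ ≤ ⟪g, s⟫ ∧ ⟪g, s⟫ ≤ α₁ := by
      rintro s ⟨x, hx, rfl⟩
      rw [inner_planeProj L hgL]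
      exact hbound₂ x hx
    have hSmax₁ : ∀ s ∈ planeProj 0 L '' K₁, ⟪g, s⟫ = α₁ → s = x₀ := by
      rintro s ⟨x, hx, rfl⟩ he
      rw [inner_planeProj L hgL] at he
      rw [hmax₁ x hx he]
      exact planeProj_self L hx₀L
    have hSmin₁ : ∀ s ∈ planeProj 0 L '' K₁, ⟪g, s⟫ = -α₁ → s = -x₀ := by
      rintro s ⟨x, hx, rfl⟩ he
      rw [inner_planeProj L hgL] at he
      rw [hmin₁ x hx he]
      exact planeProj_self L hz₀L
    obtain ⟨s₀, hs₀, hs₀e⟩ : ∃ s₀ ∈ planeProj 0 L '' K₂, z + l • s₀ = x₀ := by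
      have h := hx₀S₁; rw [hImg] at h; exact h
    obtain ⟨s₁, hs₁, hs₁e⟩ : ∃ s₁ ∈ planeProj 0 L '' K₂, z + l • s₁ = -x₀ := by
      have h := hz₀S₁; rw [hImg] at h; exact h
    have e1 : ⟪g, z⟫ + l * ⟪g, s₀⟫ = α₁ := by
      have h := congrArg (fun w => ⟪g, w⟫) hs₀e
      simp only [inner_add_right, real_inner_smul_right] at h
      rw [h, ← hα₁]
    have e2 : ⟪g, z⟫ + l * ⟪g, s₁⟫ = -α₁ := by
      have h := congrArg (fun w => ⟪g, w⟫) hs₁e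
      simp only [inner_add_right, real_inner_smul_right] at h
      rw [h, hgz₀]
    rcases hl.lt_or_gt with hlneg | hlpos
    · -- l < 0 : the homothety is the reflection in the origin
      have himg1 : z + l • (-x₀) ∈ planeProj 0 L '' K₁ := by
        rw [hImg]; exact ⟨-x₀, hz₀S₂, rfl⟩
      have himg2 : z + l • x₀ ∈ planeProj 0 L '' K₁ := by
        rw [hImg]; exact ⟨x₀, hx₀S₂, rfl⟩
      have eg1 : ⟪g, z + l • (-x₀)⟫ = ⟪g, z⟫ - l * α₁ := by
        simp only [inner_add_right, real_inner_smul_right, hgz₀]; ring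
      have eg2 : ⟪g, z + l • x₀⟫ = ⟪g, z⟫ + l * α₁ := by
        simp only [inner_add_right, real_inner_smul_right, ← hα₁]
      have hA1 : ⟪g, z⟫ - l * α₁ = α₁ := by
        have hb1 := (hSb₂ s₀ hs₀).1
        have hub := (hSb₁ _ himg1).2
        rw [eg1] at hub
        nlinarith
      have hA2 : ⟪g, z⟫ + l * α₁ = -α₁ := by
        have hb1 := (hSb₂ s₁ hs₁).2
        have hlb := (hSb₁ _ himg2).1
        rw [eg2] at hlb
        nlinarith
      have hmax1 : z + l • (-x₀) = x₀ := hSmax₁ _ himg1 (by rw [eg1, hA1])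
      have hlm1 : l = -1 := by nlinarith
      have hz0 : z = 0 := by
        rw [hlm1] at hmax1
        simp only [neg_smul, one_smul, neg_neg] at hmax1
        exact add_eq_right.1 hmax1
      have hImg' : planeProj 0 L '' K₁
          = (fun x => (0 : EuclideanSpace ℝ (Fin n)) + (-1 : ℝ) • x) '' (planeProj 0 L '' K₂) := by
        rw [hImg, hz0, hlm1]
      right
      constructor
      · rw [← spt_proj L hyL K₁, ← spt_proj L (L.neg_mem hyL) K₂, hImg',
          spt_affine_neg hcS₂ hneS₂ 0 (by norm_num : (-1:ℝ) < 0) y]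
        simp
      · rw [← spt_proj L (L.neg_mem hyL) K₁, ← spt_proj L hyL K₂, hImg',
          spt_affine_neg hcS₂ hneS₂ 0 (by norm_num : (-1:ℝ) < 0) (-y)]
        simp
    · -- l > 0 : the homothety is the identity
      have himg1 : z + l • x₀ ∈ planeProj 0 L '' K₁ := by
        rw [hImg]; exact ⟨x₀, hx₀S₂, rfl⟩
      have himg2 : z + l • (-x₀) ∈ planeProj 0 L '' K₁ := by
        rw [hImg]; exact ⟨-x₀, hz₀S₂, rfl⟩
      have eg1 : ⟪g, z + l • x₀⟫ = ⟪g, z⟫ + l * α₁ := by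
        simp only [inner_add_right, real_inner_smul_right, ← hα₁]
      have eg2 : ⟪g, z + l • (-x₀)⟫ = ⟪g, z⟫ - l * α₁ := by
        simp only [inner_add_right, real_inner_smul_right, hgz₀]; ring
      have hA1 : ⟪g, z⟫ + l * α₁ = α₁ := by
        have hb1 := (hSb₂ s₀ hs₀).2
        have hub := (hSb₁ _ himg1).2
        rw [eg1] at hub
        nlinarith
      have hA2 : ⟪g, z⟫ - l * α₁ = -α₁ := by
        have hb1 := (hSb₂ s₁ hs₁).1
        have hlb := (hSb₁ _ himg2).1
        rw [eg2] at hlb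
        nlinarith
      have hmax1 : z + l • x₀ = x₀ := hSmax₁ _ himg1 (by rw [eg1, hA1])
      have hl1 : l = 1 := by nlinarith
      have hz0 : z = 0 := by
        rw [hl1, one_smul] at hmax1
        exact add_eq_right.1 hmax1
      have hSS : planeProj 0 L '' K₁ = planeProj 0 L '' K₂ := by
        rw [hImg, hz0, hl1]
        simp
      left
      constructor
      · rw [← spt_proj L hyL K₁, ← spt_proj L hyL K₂, hSS]
      · rw [← spt_proj L (L.neg_mem hyL) K₁, ← spt_proj L (L.neg_mem hyL) K₂, hSS]
  -- widths agree
  have hW : ∀ y, spt K₁ y + spt K₁ (-y) = spt K₂ y + spt K₂ (-y) := by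
    intro y
    rcases hD y with ⟨h1, h2⟩ | ⟨h1, h2⟩
    · rw [h1, h2]
    · rw [h1, h2]; ring
  by_cases hA : ∀ y, spt K₁ y = spt K₂ y
  · left
    exact (eq_of_spt hc₁ hc₂ hcv₁ hcv₂ hne₁ hne₂ hA).symm
  by_cases hB : ∀ y, spt K₁ y = spt K₂ (-y)
  · right
    have hK₁e : K₁ = -K₂ := eq_of_spt hc₁ hc₂.neg hcv₁ hcv₂.neg hne₁ hne₂.neg
      (fun y => by rw [spt_neg_set]; exact hB y)
    rw [hK₁e, neg_neg]
  exfalso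
  push_neg at hA hB
  obtain ⟨b, hbne⟩ := hA
  obtain ⟨a, hane⟩ := hB
  have hb1 : spt K₁ b = spt K₂ (-b) := by
    rcases hD b with ⟨h1, -⟩ | ⟨h1, -⟩
    · exact absurd h1 hbne
    · exact h1
  have ha1 : spt K₁ a = spt K₂ a := by
    rcases hD a with ⟨h1, -⟩ | ⟨h1, -⟩
    · exact h1
    · exact absurd h1 hane
  have hδb : spt K₂ (-b) ≠ spt K₂ b := by rw [← hb1]; exact hbne
  have hδa : spt K₂ (-a) ≠ spt K₂ a := by
    intro h; exact hane (by rw [ha1, ← h])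
  -- choose a hyperplane containing a and b
  obtain ⟨u, hu0, hua, hub⟩ := exists_orth_vec hn a b
  set L := (Submodule.span ℝ {u})ᗮ with hLdef
  have haL : a ∈ L := mem_orth_singleton hua
  have hbL : b ∈ L := mem_orth_singleton hub
  obtain ⟨z, l, hl, hImg⟩ := hproj 0 L (finrank_orth_singleton hu0)
  have hcS₂ : IsCompact (planeProj 0 L '' K₂) := hc₂.image (continuous_planeProj 0 L)
  have hneS₂ : (planeProj 0 L '' K₂).Nonempty := hne₂.image _
  -- K₂ is not degenerate in directions of L
  by_cases hdeg : ∀ y ∈ L, spt K₂ y + spt K₂ (-y) = 0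
  · -- then K₂ lies on the line spanned by g, and is symmetric; contradiction
    have hdiff : ∀ x ∈ K₂, ∀ x' ∈ K₂, x - x' ∈ Lᗮ := by
      intro x hx x' hx'
      rw [Submodule.mem_orthogonal]
      intro w hw
      have h1 := spt_le hc₂ hx w
      have h2 := spt_le hc₂ hx' (-w)
      have h1' := spt_le hc₂ hx' w
      have h2' := spt_le hc₂ hx (-w)
      have hw0 := hdeg w hw
      have hw0' := hdeg (-w) (L.neg_mem hw)
      simp only [inner_neg_left] at h2 h2'
      rw [inner_sub_right]
      linarith
    have hLorth : Lᗮ = Submodule.span ℝ {u} := by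
      rw [hLdef]; exact Submodule.orthogonal_orthogonal _
    have hgsp : g ∈ Submodule.span ℝ {u} := by
      have hx := hdiff x₀ hx₀K₂ (-x₀) hz₀K₂
      rw [hLorth] at hx
      rw [hcg] at hx
      have h2 := Submodule.smul_mem _ c⁻¹ hx
      rwa [smul_smul, inv_mul_cancel₀ hc, one_smul] at h2
    have hspan_eq : Submodule.span ℝ {u} = Submodule.span ℝ {g} := by
      have hle' : Submodule.span ℝ {g} ≤ Submodule.span ℝ {u} :=
        (Submodule.span_singleton_le_iff_mem _ _).2 hgsp
      exact (Submodule.eq_of_le_of_finrank_le hle'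
        (by rw [finrank_span_singleton hgne, finrank_span_singleton hu0])).symm
    have hline : ∀ x ∈ K₂, ∃ t : ℝ, x = t • g := by
      intro x hx
      have hx' := hdiff x hx x₀ hx₀K₂
      rw [hLorth, hspan_eq] at hx'
      obtain ⟨t, ht⟩ := Submodule.mem_span_singleton.1 hx'
      refine ⟨t + α₁, ?_⟩
      have hx2 : x = t • g + x₀ := sub_eq_iff_eq_add.1 ht.symm
      rw [hx2, hx₀g, ← add_smul]
    have hsym : ∀ y, spt K₂ y = α₁ * |⟪y, g⟫| := by
      intro y
      apply le_antisymm
      · apply spt_ub hne₂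
        intro x hx
        obtain ⟨t, rfl⟩ := hline x hx
        have hb2 := hbound₂ _ hx
        have htt : ⟪g, t • g⟫ = t := by rw [real_inner_smul_right, hgg, mul_one]
        rw [htt] at hb2
        have hta : |t| ≤ α₁ := abs_le.2 ⟨hb2.1, hb2.2⟩
        calc ⟪y, t • g⟫ = t * ⟪y, g⟫ := real_inner_smul_right _ _ _
          _ ≤ |t * ⟪y, g⟫| := le_abs_self _
          _ = |t| * |⟪y, g⟫| := abs_mul _ _
          _ ≤ α₁ * |⟪y, g⟫| := mul_le_mul_of_nonneg_right hta (abs_nonneg _)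
      · rcases le_or_gt 0 ⟪y, g⟫ with hyg | hyg
        · have h := spt_le hc₂ hx₀K₂ y
          calc α₁ * |⟪y, g⟫| = ⟪y, x₀⟫ := by
                rw [abs_of_nonneg hyg, hx₀g, real_inner_smul_right]
            _ ≤ spt K₂ y := h
        · have h := spt_le hc₂ hz₀K₂ y
          calc α₁ * |⟪y, g⟫| = ⟪y, -x₀⟫ := by
                rw [abs_of_neg hyg, hx₀g, inner_neg_right, real_inner_smul_right]; ring
            _ ≤ spt K₂ y := h
    exact hδb (by rw [hsym, hsym, inner_neg_left, abs_neg])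
  push_neg at hdeg
  obtain ⟨y₀, hy₀L, hy₀W⟩ := hdeg
  rcases hl.lt_or_gt with hlneg | hlpos
  · -- l < 0
    have hrel : ∀ w ∈ L, spt K₁ w = ⟪w, z⟫ + (-l) * spt K₂ (-w) := by
      intro w hw
      rw [← spt_proj L hw K₁, hImg, spt_affine_neg hcS₂ hneS₂ z hlneg w,
        spt_proj L (L.neg_mem hw) K₂, real_inner_comm]
    have hWr := hW y₀
    have h1 := hrel y₀ hy₀L
    have h2 := hrel (-y₀) (L.neg_mem hy₀L)
    rw [neg_neg] at h2
    have hinn : ⟪(-y₀ : EuclideanSpace ℝ (Fin n)), z⟫ = -⟪y₀, z⟫ := inner_neg_left _ _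
    have hWeq : (1:ℝ) * (spt K₂ y₀ + spt K₂ (-y₀)) = (-l) * (spt K₂ y₀ + spt K₂ (-y₀)) := by
      rw [one_mul]; rw [h1, h2, hinn] at hWr; linarith
    have hlm1 : -l = 1 := (mul_right_cancel₀ hy₀W hWeq).symm
    have hrel' : ∀ w ∈ L, spt K₁ w = ⟪w, z⟫ + spt K₂ (-w) := by
      intro w hw; rw [hrel w hw, hlm1, one_mul]
    have hzb : ⟪b, z⟫ = 0 := by
      have h := hrel' b hbL; rw [hb1] at h; linarith
    have hza : ⟪a, z⟫ = spt K₂ a - spt K₂ (-a) := by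
      have h := hrel' a haL; rw [ha1] at h; linarith
    have hzane : ⟪a, z⟫ ≠ 0 := by
      rw [hza]; exact sub_ne_zero.2 (Ne.symm hδa)
    have hkey : ∀ t : ℝ, 0 < t →
        spt K₂ (-(b + t • a)) - spt K₂ (b + t • a) = t * (-⟪a, z⟫) := by
      intro t ht
      have hmem : b + t • a ∈ L := L.add_mem hbL (L.smul_mem t haL)
      have hinz : ⟪b + t • a, z⟫ = t * ⟪a, z⟫ := by
        rw [inner_add_left, real_inner_smul_left, hzb]; ring
      have hrw := hrel' _ hmem
      rw [hinz] at hrw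
      rcases hD (b + t • a) with ⟨h1', -⟩ | ⟨h1', -⟩
      · rw [h1'] at hrw; linarith
      · exfalso
        rw [h1'] at hrw
        have h0 : t * ⟪a, z⟫ = 0 := by linarith
        rcases mul_eq_zero.1 h0 with h | h
        · exact ht.ne' h
        · exact hzane h
    exact hδb (spt_diff_eq_zero hc₂ hne₂ b a (-⟪a, z⟫) hkey)
  · -- l > 0
    have hrel : ∀ w ∈ L, spt K₁ w = ⟪w, z⟫ + l * spt K₂ w := by
      intro w hw
      rw [← spt_proj L hw K₁, hImg, spt_affine_pos hcS₂ hneS₂ z hlpos w,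
        spt_proj L hw K₂, real_inner_comm]
    have hWr := hW y₀
    have h1 := hrel y₀ hy₀L
    have h2 := hrel (-y₀) (L.neg_mem hy₀L)
    have hinn : ⟪(-y₀ : EuclideanSpace ℝ (Fin n)), z⟫ = -⟪y₀, z⟫ := inner_neg_left _ _
    have hWeq : (1:ℝ) * (spt K₂ y₀ + spt K₂ (-y₀)) = l * (spt K₂ y₀ + spt K₂ (-y₀)) := by
      rw [one_mul]; rw [h1, h2, hinn] at hWr; linarith
    have hl1 : l = 1 := (mul_right_cancel₀ hy₀W hWeq).symm
    have hrel' : ∀ w ∈ L, spt K₁ w = ⟪w, z⟫ + spt K₂ w := by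
      intro w hw; rw [hrel w hw, hl1, one_mul]
    have hza : ⟪a, z⟫ = 0 := by
      have h := hrel' a haL; rw [ha1] at h; linarith
    have hzb : ⟪b, z⟫ = spt K₂ (-b) - spt K₂ b := by
      have h := hrel' b hbL; rw [hb1] at h; linarith
    have hzbne : ⟪b, z⟫ ≠ 0 := by
      rw [hzb]; exact sub_ne_zero.2 hδb
    have hkey : ∀ t : ℝ, 0 < t →
        spt K₂ (-(a + t • b)) - spt K₂ (a + t • b) = t * ⟪b, z⟫ := by
      intro t ht
      have hmem : a + t • b ∈ L := L.add_mem haL (L.smul_mem t hbL)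
      have hinz : ⟪a + t • b, z⟫ = t * ⟪b, z⟫ := by
        rw [inner_add_left, real_inner_smul_left, hza]; ring
      have hrw := hrel' _ hmem
      rw [hinz] at hrw
      rcases hD (a + t • b) with ⟨h1', -⟩ | ⟨h1', -⟩
      · exfalso
        rw [h1'] at hrw
        have h0 : t * ⟪b, z⟫ = 0 := by linarith
        rcases mul_eq_zero.1 h0 with h | h
        · exact ht.ne' h
        · exact hzbne h
      · rw [h1'] at hrw; linarith
    exact hδa (spt_diff_eq_zero hc₂ hne₂ a b ⟪b, z⟫ hkey)
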